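/- Let q be a prime power, GF(q) the finite field with q elements, and f : GF(q) → GF(q) any function. For a, b ∈ GF(q), let c(a,b) be the vector of length q+1 over GF(q) whose coordinates are a·f(x) + b·x for each x ∈ GF(q)*, followed by the two coordinates b and a. Then every codeword c(a,b) with (a,b) ≠ (0,0) has Hamming weight exactly q if and only if both of the following hold: (1) f(x) ≠ 0 for all x ∈ GF(q)*, and (2) y·f(x) − x·f(y) ≠ 0 for all distinct x, y ∈ GF(q)*. -/
import Mathlib
set_option linter.unnecessarySimpa false


/-- The codeword `c(a,b)` of the code `C_{(f,q)}`: coordinates `a·f(x) + b·x` for each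
nonzero `x` of the finite field `F = GF(q)`, followed by the two coordinates `b` and `a`. -/
def mdsCodeword {F : Type*} [Field F] (f : F → F) (a b : F) :
    ({x : F // x ≠ 0} ⊕ Fin 2) → F :=
  Sum.elim (fun x => a * f x.1 + b * x.1) ![b, a]

/-- Every codeword `c(a,b)` with `(a,b) ≠ (0,0)` has Hamming weight exactly `q` if and only if
`f(x) ≠ 0` for all `x ∈ GF(q)*` and `y·f(x) − x·f(y) ≠ 0` for all distinct `x, y ∈ GF(q)*`. -/
theorem stmt0 {F : Type*} [Field F] [Fintype F] [DecidableEq F] (f : F → F) :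
    (∀ a b : F, (a, b) ≠ (0, 0) →
        hammingNorm (mdsCodeword f a b) = Fintype.card F) ↔
      ((∀ x : F, x ≠ 0 → f x ≠ 0) ∧
        ∀ x y : F, x ≠ 0 → y ≠ 0 → x ≠ y → y * f x - x * f y ≠ 0) := by
  classical
  have hq : 0 < Fintype.card F := Fintype.card_pos
  have hcard : Fintype.card ({x : F // x ≠ 0} ⊕ Fin 2) = Fintype.card F + 1 := by
    rw [Fintype.card_sum, Fintype.card_fin]
    have h1 : Fintype.card {x : F // x = 0} = 1 := by
      simp [Fintype.card_subtype_eq]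
    have h2 : Fintype.card {x : F // x ≠ 0} = Fintype.card F - 1 := by
      have := Fintype.card_subtype_compl (fun x : F => x = 0)
      simpa [h1] using this
    omega
  have key : ∀ a b : F,
      hammingNorm (mdsCodeword f a b)
        + (Finset.univ.filter fun i => mdsCodeword f a b i = 0).card
        = Fintype.card F + 1 := by
    intro a b
    rw [← hcard, ← Finset.card_univ]
    unfold hammingNorm
    rw [add_comm]
    exact Finset.card_filter_add_card_filter_not _
  constructor
  · intro H
    have two_le : ∀ a b : F, (a, b) ≠ (0, 0) →
        ∀ i j : ({x : F // x ≠ 0} ⊕ Fin 2), i ≠ j →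
        mdsCodeword f a b i = 0 → mdsCodeword f a b j = 0 → False := by
      intro a b hab i j hij hi hj
      have k1 := key a b
      have k2 := H a b hab
      have : 1 < (Finset.univ.filter fun i => mdsCodeword f a b i = 0).card :=
        Finset.one_lt_card.mpr ⟨i, by simp [hi], j, by simp [hj], hij⟩
      omega
    constructor
    · intro x hx hfx
      refine two_le 1 0 (by simp) (Sum.inl ⟨x, hx⟩) (Sum.inr 0) (by simp) ?_ ?_
      · simp [mdsCodeword, hfx]
      · simp [mdsCodeword]
    · intro x y hx hy hxy h
      refine two_le x (-f x) (by simp [Prod.ext_iff, hx]) (Sum.inl ⟨x, hx⟩)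
        (Sum.inl ⟨y, hy⟩) (by simp [hxy]) ?_ ?_
      · show x * f x + (-f x) * x = 0
        ring
      · show x * f y + (-f x) * y = 0
        linear_combination -h
  · rintro ⟨h1, h2⟩ a b hab
    have hzero : ∃ i₀, ∀ j, mdsCodeword f a b j = 0 ↔ j = i₀ := by
      rcases eq_or_ne a 0 with ha | ha
      · subst ha
        have hb : b ≠ 0 := by
          intro hb; exact hab (by simp [hb])
        refine ⟨Sum.inr 1, ?_⟩
        rintro (⟨x, hx⟩ | k)
        · simp [mdsCodeword, hb, hx]
        · fin_cases k <;> simp [mdsCodeword, hb]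
      · rcases eq_or_ne b 0 with hb | hb
        · subst hb
          refine ⟨Sum.inr 0, ?_⟩
          rintro (⟨x, hx⟩ | k)
          · simp [mdsCodeword, ha, h1 x hx]
          · fin_cases k <;> simp [mdsCodeword, ha]
        · set g : {x : F // x ≠ 0} → {x : F // x ≠ 0} :=
            fun x => ⟨f x.1 / x.1, div_ne_zero (h1 x.1 x.2) x.2⟩ with hg
          have ginj : Function.Injective g := by
            intro x y hxy
            by_contra hne
            have hne' : x.1 ≠ y.1 := fun h => hne (Subtype.ext h)
            apply h2 x.1 y.1 x.2 y.2 hne'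
            have hv : f x.1 / x.1 = f y.1 / y.1 := congrArg Subtype.val hxy
            rw [div_eq_div_iff x.2 y.2] at hv
            linear_combination hv
          have gsurj : Function.Surjective g := Finite.surjective_of_injective ginj
          obtain ⟨x₀, hx₀⟩ := gsurj ⟨-b / a, div_ne_zero (neg_ne_zero.mpr hb) ha⟩
          have hx₀v : f x₀.1 / x₀.1 = -b / a := congrArg Subtype.val hx₀
          have heq0 : a * f x₀.1 + b * x₀.1 = 0 := by
            rw [div_eq_div_iff x₀.2 ha] at hx₀v
            linear_combination hx₀v
          refine ⟨Sum.inl x₀, ?_⟩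
          rintro (⟨y, hy⟩ | k)
          · constructor
            · intro hzy
              have hzy' : a * f y + b * y = 0 := hzy
              have : g ⟨y, hy⟩ = ⟨-b / a, div_ne_zero (neg_ne_zero.mpr hb) ha⟩ := by
                apply Subtype.ext
                show f y / y = -b / a
                rw [div_eq_div_iff hy ha]
                linear_combination hzy'
              have := ginj (this.trans hx₀.symm)
              simp [this]
            · intro hj
              have : (⟨y, hy⟩ : {x : F // x ≠ 0}) = x₀ := by
                simpa using hj
              show a * f y + b * y = 0
              rw [show y = x₀.1 from congrArg Subtype.val this]
              exact heq0
          · fin_cases k <;> simp [mdsCodeword, ha, hb]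
    obtain ⟨i₀, hi₀⟩ := hzero
    have hone : (Finset.univ.filter fun i => mdsCodeword f a b i = 0).card = 1 := by
      rw [Finset.card_eq_one]
      exact ⟨i₀, by ext j; simp [hi₀ j]⟩
    have := key a b
    omega
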